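/- Let U ⊆ ℂ^d be a nonempty open set with compact closure and let z₀ ∈ U. Then the function γ : U → ℝ defined by γ(z) = sup{|f(z)| : f analytic on U, f(z₀) = 0, sup_U |f| ≤ 1} is continuous on U. -/

import Mathlib

open Filter Topology Metric

/-- `ℂ^d` with the Euclidean norm. -/
abbrev Cd (d : ℕ) := EuclideanSpace ℂ (Fin d)

variable {E : Type*} [NormedAddCommGroup E] [NormedSpace ℂ E]

/-- `supNorm f K = sup_{z ∈ K} |f z|`. -/
noncomputable def supNorm (f : E → ℂ) (K : Set E) : ℝ :=
  sSup ((fun z => ‖f z‖) '' K)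

/-- The series `∑ cₙ φₙ` converges to `f` uniformly on every compact subset of `D`. -/
def ExpandsTo (φ : ℕ → E → ℂ) (c : ℕ → ℂ) (f : E → ℂ) (D : Set E) : Prop :=
  ∀ K : Set E, K ⊆ D → IsCompact K →
    TendstoUniformlyOn (fun N z => ∑ n ∈ Finset.range N, c n * φ n z) f atTop K

/-- `φ` is a basis of the space of analytic functions on `D`: each `φₙ` is analytic on `D`
and every analytic function on `D` has a unique expansion converging uniformly on
compact subsets of `D`. -/
def IsBasisOn (φ : ℕ → E → ℂ) (D : Set E) : Prop :=
  (∀ n, DifferentiableOn ℂ (φ n) D) ∧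
    ∀ f : E → ℂ, DifferentiableOn ℂ f D → ∃! c : ℕ → ℂ, ExpandsTo φ c f D

/-- The Global Bohr Property of a basis `φ`, relative to `D`. -/
def HasGBP (φ : ℕ → E → ℂ) (D : Set E) : Prop :=
  ∀ K : Set E, K ⊆ D → IsCompact K →
    ∃ K₁ : Set E, K₁ ⊆ D ∧ IsCompact K₁ ∧ K ⊆ K₁ ∧
      ∀ (f : E → ℂ) (c : ℕ → ℂ), DifferentiableOn ℂ f D → ExpandsTo φ c f D →
        ∀ N : ℕ, ∑ n ∈ Finset.range N, ‖c n‖ * supNorm (φ n) K ≤ supNorm f K₁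

/-- Every bounded analytic function on `D` is constant. -/
def LiouvilleProperty (D : Set E) : Prop :=
  ∀ f : E → ℂ, DifferentiableOn ℂ f D → (∃ M : ℝ, ∀ z ∈ D, ‖f z‖ ≤ M) →
    ∀ z ∈ D, ∀ w ∈ D, f z = f w

/-- The Schwarz Property of a domain `D`. -/
def SchwarzProperty (D : Set E) : Prop :=
  ∀ z₀ ∈ D, ∀ K : Set E, K ⊆ D → IsCompact K → z₀ ∈ K → ∀ δ : ℝ, 0 < δ →
    ∃ K₁ : Set E, K₁ ⊆ D ∧ IsCompact K₁ ∧ K ⊆ K₁ ∧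
      ∀ (U : Set E) (f : E → ℂ), IsOpen U → K₁ ⊆ U → DifferentiableOn ℂ f U →
        supNorm (fun z => f z - f z₀) K ≤ δ * supNorm (fun z => f z - f z₀) K₁

/-- An exhaustion of `D` by relatively compact open sets. -/
def IsExhaustion (Dn : ℕ → Set E) (D : Set E) : Prop :=
  (∀ n, IsOpen (Dn n)) ∧ (∀ n, IsCompact (closure (Dn n))) ∧
    (∀ n, closure (Dn n) ⊆ Dn (n + 1)) ∧ (⋃ n, Dn n) = D

/-- `gammaFn U z₀ z = sup {|f z| : f analytic on U, f z₀ = 0, sup_U |f| ≤ 1}`. -/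
noncomputable def gammaFn (U : Set E) (z₀ z : E) : ℝ :=
  sSup {t : ℝ | ∃ f : E → ℂ, DifferentiableOn ℂ f U ∧ f z₀ = 0 ∧
    (∀ w ∈ U, ‖f w‖ ≤ 1) ∧ t = ‖f z‖}


/-- Key uniform estimate via the Schwarz lemma on a complex line. -/
lemma key_est {U : Set E} {f : E → ℂ} (hf : DifferentiableOn ℂ f U)
    (hb : ∀ y ∈ U, ‖f y‖ ≤ 1) {z : E} {r : ℝ} (hr : 0 < r)
    (hsub : closedBall z r ⊆ U) {w : E} (hw : w ∈ ball z r) :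
    ‖f w - f z‖ ≤ 3 / r * dist w z := by
  rcases eq_or_ne w z with rfl | hne
  · simp [mul_nonneg, div_nonneg, hr.le]
  set v := w - z with hv_def
  have hvpos : 0 < ‖v‖ := by
    simpa [hv_def, sub_eq_zero] using norm_pos_iff.mpr (sub_ne_zero.mpr hne)
  set R := r / ‖v‖ with hR_def
  have hvr : ‖v‖ < r := by simpa [hv_def, dist_eq_norm] using mem_ball.mp hw
  have hR1 : 1 < R := (one_lt_div hvpos).mpr hvr
  set g : ℂ → ℂ := fun t => f (z + t • v) with hg_def
  have hmaps : ∀ t : ℂ, t ∈ ball (0 : ℂ) R → z + t • v ∈ ball z r := by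
    intro t ht
    rw [mem_ball] at ht ⊢
    have : dist (z + t • v) z = ‖t‖ * ‖v‖ := by
      simp [dist_eq_norm, add_sub_cancel_left, norm_smul]
    rw [this]
    have ht' : ‖t‖ < R := by simpa [dist_eq_norm] using ht
    calc ‖t‖ * ‖v‖ < R * ‖v‖ := by exact mul_lt_mul_of_pos_right ht' hvpos
      _ = r := div_mul_cancel₀ _ hvpos.ne'
  have hg : DifferentiableOn ℂ g (ball (0 : ℂ) R) := by
    apply hf.comp
    · exact ((differentiable_id.smul_const v).const_add z).differentiableOn
    · intro t ht
      exact hsub (ball_subset_closedBall (hmaps t ht))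
  have hg0 : g 0 = f z := by simp [hg_def]
  have hg1 : g 1 = f w := by simp [hg_def, hv_def]
  have hmaps2 : Set.MapsTo g (ball (0 : ℂ) R) (ball (g 0) 3) := by
    intro t ht
    have h1 : ‖g t‖ ≤ 1 := hb _ (hsub (ball_subset_closedBall (hmaps t ht)))
    have h2 : ‖g 0‖ ≤ 1 := by
      rw [hg0]; exact hb z (hsub (mem_closedBall_self hr.le))
    rw [mem_ball, dist_eq_norm]
    calc ‖g t - g 0‖ ≤ ‖g t‖ + ‖g 0‖ := norm_sub_le _ _
      _ ≤ 2 := by linarith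
      _ < 3 := by norm_num
  have h1mem : (1 : ℂ) ∈ ball (0 : ℂ) R := by
    rw [mem_ball]; simpa using hR1
  have hest := Complex.dist_le_div_mul_dist_of_mapsTo_ball hg (hmaps2.mono_right ball_subset_closedBall) h1mem
  rw [hg0, hg1] at hest
  have : dist (f w) (f z) ≤ 3 / R := by
    have h10 : dist (1 : ℂ) 0 = 1 := by simp
    rwa [h10, mul_one] at hest
  rw [dist_eq_norm] at this
  calc ‖f w - f z‖ ≤ 3 / R := this
    _ = 3 / r * ‖v‖ := by rw [hR_def]; field_simp
    _ = 3 / r * dist w z := by rw [hv_def, dist_eq_norm]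

lemma gamma_set_nonempty (U : Set E) (z₀ z : E) :
    (0 : ℝ) ∈ {t : ℝ | ∃ f : E → ℂ, DifferentiableOn ℂ f U ∧ f z₀ = 0 ∧
      (∀ w ∈ U, ‖f w‖ ≤ 1) ∧ t = ‖f z‖} :=
  ⟨fun _ => 0, differentiableOn_const 0, rfl, fun _ _ => by simp, by simp⟩

lemma gamma_bdd (U : Set E) (z₀ : E) {z : E} (hz : z ∈ U) :
    BddAbove {t : ℝ | ∃ f : E → ℂ, DifferentiableOn ℂ f U ∧ f z₀ = 0 ∧
      (∀ w ∈ U, ‖f w‖ ≤ 1) ∧ t = ‖f z‖} := by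
  refine ⟨1, ?_⟩
  rintro t ⟨f, hd, h0, hb, rfl⟩
  exact hb z hz

lemma gamma_nonneg (U : Set E) (z₀ : E) {z : E} (hz : z ∈ U) :
    0 ≤ gammaFn U z₀ z :=
  le_csSup (gamma_bdd U z₀ hz) (gamma_set_nonempty U z₀ z)

lemma gamma_lip (U : Set E) (z₀ : E) {z w : E} {r : ℝ} (hr : 0 < r)
    (hsub : closedBall z r ⊆ U) (hw : w ∈ ball z r) :
    gammaFn U z₀ w ≤ gammaFn U z₀ z + 3 / r * dist w z ∧
      gammaFn U z₀ z ≤ gammaFn U z₀ w + 3 / r * dist w z := by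
  have hz : z ∈ U := hsub (mem_closedBall_self hr.le)
  have hwU : w ∈ U := hsub (ball_subset_closedBall hw)
  constructor
  · apply Real.sSup_le
    · rintro t ⟨f, hd, h0, hb, rfl⟩
      have h1 : ‖f z‖ ≤ gammaFn U z₀ z :=
        le_csSup (gamma_bdd U z₀ hz) ⟨f, hd, h0, hb, rfl⟩
      have h2 := key_est hd hb hr hsub hw
      have h3 : ‖f w‖ ≤ ‖f z‖ + ‖f w - f z‖ := by
        calc ‖f w‖ = ‖f z + (f w - f z)‖ := by ring_nf
          _ ≤ ‖f z‖ + ‖f w - f z‖ := norm_add_le _ _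
      linarith
    · have := gamma_nonneg U z₀ hz
      have : (0:ℝ) ≤ 3 / r * dist w z := by positivity
      linarith [gamma_nonneg U z₀ hz]
  · apply Real.sSup_le
    · rintro t ⟨f, hd, h0, hb, rfl⟩
      have h1 : ‖f w‖ ≤ gammaFn U z₀ w :=
        le_csSup (gamma_bdd U z₀ hwU) ⟨f, hd, h0, hb, rfl⟩
      have h2 := key_est hd hb hr hsub hw
      have h3 : ‖f z‖ ≤ ‖f w‖ + ‖f w - f z‖ := by
        calc ‖f z‖ = ‖f w + (f z - f w)‖ := by ring_nf
          _ ≤ ‖f w‖ + ‖f z - f w‖ := norm_add_le _ _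
          _ = ‖f w‖ + ‖f w - f z‖ := by rw [norm_sub_rev]
      linarith
    · have : (0:ℝ) ≤ 3 / r * dist w z := by positivity
      linarith [gamma_nonneg U z₀ hwU]

theorem gamma_cont (U : Set E) (hU : IsOpen U) (z₀ : E) :
    ContinuousOn (gammaFn U z₀) U := by
  intro z hz
  obtain ⟨ε, hε, hball⟩ := Metric.isOpen_iff.mp hU z hz
  set r := ε / 2 with hr_def
  have hr : 0 < r := by positivity
  have hsub : closedBall z r ⊆ U :=
    (closedBall_subset_ball (by simp [hr_def]; linarith)).trans hball
  rw [Metric.continuousWithinAt_iff]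
  intro ε' hε'
  refine ⟨min r (ε' / (3 / r)), by positivity, ?_⟩
  intro w _ hd
  have hwball : w ∈ ball z r := mem_ball.mpr (hd.trans_le (min_le_left _ _))
  obtain ⟨h1, h2⟩ := gamma_lip U z₀ hr hsub hwball
  have hdist : dist w z < ε' / (3 / r) := hd.trans_le (min_le_right _ _)
  have hL : 0 < 3 / r := by positivity
  have : dist (gammaFn U z₀ w) (gammaFn U z₀ z) ≤ 3 / r * dist w z := by
    rw [Real.dist_eq, abs_sub_le_iff]
    constructor <;> linarith
  calc dist (gammaFn U z₀ w) (gammaFn U z₀ z) ≤ 3 / r * dist w z := this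
    _ < 3 / r * (ε' / (3 / r)) := by exact mul_lt_mul_of_pos_left hdist hL
    _ = ε' := by field_simp

/-- for a nonempty open `U ⊆ ℂ^d` with compact closure and `z₀ ∈ U`, the
function `γ(z) = sup {|f z| : f analytic on U, f z₀ = 0, sup_U |f| ≤ 1}` is continuous
on `U`. -/
theorem stmt14 (d : ℕ) (U : Set (Cd d)) (hU : IsOpen U) (hne : U.Nonempty)
    (hUc : IsCompact (closure U)) (z₀ : Cd d) (hz₀ : z₀ ∈ U) :
    ContinuousOn (gammaFn U z₀) U := by
  exact gamma_cont U hU z₀
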